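/- Let G be an invertible symmetric real n×n matrix, N a real n×q matrix, n⁺ ∈ ℝⁿ, and N₊ = [N n⁺], with both NᵀG⁻¹N and N₊ᵀG⁻¹N₊ invertible. Let H = G⁻¹(I − N N*), H₊ = G⁻¹(I − N₊ N₊*) with P* = (PᵀG⁻¹P)⁻¹PᵀG⁻¹, let c ∈ ℝⁿ, f(w) = ½wᵀGw + cᵀw, g(w) = Gw + c, d = H n⁺, and suppose z ∈ ℝⁿ satisfies H₊ g(z) = 0. Let u_p(z) denote the last component of −N₊* g(z). Then for every t ∈ ℝ, with z̄ = z + t d: f(z̄) = f(z) + t · (dᵀn⁺) · (t/2 − u_p(z)). -/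

import Mathlib

open Matrix

/-- Change of the quadratic objective along the step `d = H n⁺` from a stationary point:
`f(z̄) = f(z) + t (dᵀn⁺)(t/2 − u_p(z))`. -/
theorem stmt_5 {n q : ℕ} (G : Matrix (Fin n) (Fin n) ℝ)
    (hGsym : G.IsSymm) (hG : IsUnit G.det)
    (N : Matrix (Fin n) (Fin q) ℝ) (nplus : Fin n → ℝ)
    (Nplus : Matrix (Fin n) (Fin q ⊕ Unit) ℝ)
    (hNplus : Nplus = Matrix.fromCols N (Matrix.replicateCol Unit nplus))
    (hN : IsUnit (Nᵀ * G⁻¹ * N).det)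
    (hNp : IsUnit (Nplusᵀ * G⁻¹ * Nplus).det)
    (H Hplus : Matrix (Fin n) (Fin n) ℝ)
    (hH : H = G⁻¹ * (1 - N * ((Nᵀ * G⁻¹ * N)⁻¹ * Nᵀ * G⁻¹)))
    (hHplus : Hplus = G⁻¹ * (1 - Nplus * ((Nplusᵀ * G⁻¹ * Nplus)⁻¹ * Nplusᵀ * G⁻¹)))
    (c : Fin n → ℝ)
    (f : (Fin n → ℝ) → ℝ) (hf : ∀ w, f w = (1 / 2) * (w ⬝ᵥ G *ᵥ w) + c ⬝ᵥ w)
    (g : (Fin n → ℝ) → Fin n → ℝ) (hg : ∀ w, g w = G *ᵥ w + c)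
    (d : Fin n → ℝ) (hd : d = H *ᵥ nplus)
    (z : Fin n → ℝ) (hz : Hplus *ᵥ g z = 0)
    (up : ℝ)
    (hup : up = (-(((Nplusᵀ * G⁻¹ * Nplus)⁻¹ * Nplusᵀ * G⁻¹) *ᵥ g z)) (Sum.inr ())) :
    ∀ t : ℝ, f (z + t • d) = f z + t * (d ⬝ᵥ nplus) * (t / 2 - up) := by
  intro t
  have hGinv : G * G⁻¹ = 1 := Matrix.mul_nonsing_inv G hG
  -- Nᵀ * H = 0
  have hNH : Nᵀ * H = 0 := by
    rw [hH, ← Matrix.mul_assoc, Matrix.mul_sub, Matrix.mul_one, ← Matrix.mul_assoc,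
      Matrix.mul_assoc ((Nᵀ * G⁻¹ * N)⁻¹), Matrix.mul_nonsing_inv_cancel_left _ _ hN, sub_self]
  have hNtd : Nᵀ *ᵥ d = 0 := by
    rw [hd, Matrix.mulVec_mulVec, hNH, Matrix.zero_mulVec]
  -- G * H = 1 - N N*
  have hGH : G * H = 1 - N * ((Nᵀ * G⁻¹ * N)⁻¹ * Nᵀ * G⁻¹) := by
    rw [hH, ← Matrix.mul_assoc, hGinv, one_mul]
  have hGd' : G *ᵥ d = nplus - N *ᵥ (((Nᵀ * G⁻¹ * N)⁻¹ * Nᵀ * G⁻¹) *ᵥ nplus) := by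
    rw [hd, Matrix.mulVec_mulVec, hGH, Matrix.sub_mulVec, Matrix.one_mulVec,
      ← Matrix.mulVec_mulVec]
  have hGd : d ⬝ᵥ G *ᵥ d = d ⬝ᵥ nplus := by
    rw [hGd', dotProduct_sub, Matrix.dotProduct_mulVec d N, ← Matrix.mulVec_transpose,
      hNtd, zero_dotProduct, sub_zero]
  -- stationarity: g z = Nplus *ᵥ v
  set v : (Fin q ⊕ Unit) → ℝ := ((Nplusᵀ * G⁻¹ * Nplus)⁻¹ * Nplusᵀ * G⁻¹) *ᵥ g z with hv
  have hgz : g z = Nplus *ᵥ v := by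
    have h0 : G *ᵥ (Hplus *ᵥ g z) = 0 := by rw [hz, Matrix.mulVec_zero]
    rw [Matrix.mulVec_mulVec, hHplus, ← Matrix.mul_assoc, hGinv, one_mul,
      Matrix.sub_mulVec, Matrix.one_mulVec, sub_eq_zero, ← Matrix.mulVec_mulVec] at h0
    exact h0
  have hdNp : Nplusᵀ *ᵥ d = Sum.elim (0 : Fin q → ℝ) (fun _ => d ⬝ᵥ nplus) := by
    rw [hNplus, Matrix.transpose_fromCols]
    ext (i | u)
    · simp [Matrix.fromRows_mulVec, hNtd]
    · simp [Matrix.fromRows_mulVec, Matrix.replicateRow, Matrix.mulVec, dotProduct, mul_comm]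
  have hdgz : d ⬝ᵥ g z = (d ⬝ᵥ nplus) * (-up) := by
    rw [hgz, Matrix.dotProduct_mulVec d Nplus, ← Matrix.mulVec_transpose, hdNp]
    have hupv : up = -(v (Sum.inr ())) := by rw [hup]; rfl
    rw [hupv]
    simp [dotProduct, Fintype.sum_sum_type, mul_comm]
  -- symmetric cross term
  have hsym : z ⬝ᵥ G *ᵥ d = d ⬝ᵥ G *ᵥ z := by
    rw [Matrix.dotProduct_mulVec, ← Matrix.mulVec_transpose, hGsym.eq, dotProduct_comm]
  have hdgz' : d ⬝ᵥ G *ᵥ z + d ⬝ᵥ c = (d ⬝ᵥ nplus) * (-up) := by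
    rw [← dotProduct_add, ← hg z, hdgz]
  have hc : c ⬝ᵥ d = d ⬝ᵥ c := dotProduct_comm _ _
  rw [hf, hf]
  simp only [Matrix.mulVec_add, Matrix.mulVec_smul, add_dotProduct, dotProduct_add,
    dotProduct_smul, smul_dotProduct, smul_eq_mul]
  rw [hsym, hGd]
  linear_combination t * hdgz' + t * hc
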